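/- Fix S ≥ 3 and T ≥ 4. Let A be the design matrix of the THMC model without initial parameters and without self-loops, and let C ⊆ ℝ^{S(S−1)} be the cone generated by its columns. If x ∈ ℤA ∩ C, then ∑_{i≠j} x_{ij} = k(T−1) for some k ∈ ℕ, and for every state i, |x_{i+} − x_{+i}| ≤ k, where x_{i+} = ∑_j x_{ij} and x_{+i} = ∑_j x_{ji}. -/

import Mathlib

/-- The number of transitions `p.1 → p.2` in the word `w` of length `T` over `[S]`. -/
def trCount (S T : ℕ) (w : Fin T → Fin S) (p : Fin S × Fin S) : ℕ :=
  (Finset.univ.filter (fun t : Fin (T - 1) =>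
    w ⟨t.1, by have := t.2; omega⟩ = p.1 ∧ w ⟨t.1 + 1, by have := t.2; omega⟩ = p.2)).card

/-- A word has no self-loops (no two consecutive equal letters). -/
def NoLoop (S T : ℕ) (w : Fin T → Fin S) : Prop :=
  ∀ t : Fin (T - 1), w ⟨t.1, by have := t.2; omega⟩ ≠ w ⟨t.1 + 1, by have := t.2; omega⟩

instance (S T : ℕ) : DecidablePred (NoLoop S T) := fun w => by
  unfold NoLoop; infer_instance

section Aux
/- paste aux lemmas -/
lemma trCount_diag {S T : ℕ} {w : Fin T → Fin S} (hw : NoLoop S T w) (q : Fin S) :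
    trCount S T w (q, q) = 0 := by
  unfold trCount
  rw [Finset.card_eq_zero, Finset.filter_eq_empty_iff]
  rintro t - ⟨h1, h2⟩
  exact hw t (h1.trans h2.symm)

lemma sum_subtype_eq {S : ℕ} {M : Type*} [AddCommMonoid M]
    (g : Fin S × Fin S → M) (hg : ∀ i, g (i, i) = 0) :
    ∑ p : {p : Fin S × Fin S // p.1 ≠ p.2}, g p.1 = ∑ p : Fin S × Fin S, g p := by
  rw [← Finset.sum_subtype (Finset.univ.filter (fun p : Fin S × Fin S => p.1 ≠ p.2))
    (by simp) g]
  apply Finset.sum_subset (Finset.filter_subset _ _)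
  rintro ⟨a, b⟩ - hp
  simp only [Finset.mem_filter, Finset.mem_univ, true_and, not_not] at hp
  subst hp
  exact hg a

lemma sum_trCount {S T : ℕ} (w : Fin T → Fin S) :
    ∑ p : Fin S × Fin S, trCount S T w p = T - 1 := by
  unfold trCount
  simp_rw [Finset.card_filter]
  rw [Finset.sum_comm]
  have h : ∀ t : Fin (T - 1), (∑ p : Fin S × Fin S,
      if w ⟨t.1, by have := t.2; omega⟩ = p.1 ∧ w ⟨t.1 + 1, by have := t.2; omega⟩ = p.2
      then 1 else 0) = 1 := by
    intro t
    have : ∀ p : Fin S × Fin S,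
        (w ⟨t.1, by have := t.2; omega⟩ = p.1 ∧ w ⟨t.1 + 1, by have := t.2; omega⟩ = p.2) ↔
        (w ⟨t.1, by have := t.2; omega⟩, w ⟨t.1 + 1, by have := t.2; omega⟩) = p := by
      intro p; rw [Prod.ext_iff]
    simp_rw [this]
    simp
  simp_rw [h]
  simp
def headCt (S T : ℕ) (w : Fin T → Fin S) (i : Fin S) : ℕ :=
  (Finset.univ.filter (fun t : Fin (T - 1) => w ⟨t.1, by have := t.2; omega⟩ = i)).card

def tailCt (S T : ℕ) (w : Fin T → Fin S) (i : Fin S) : ℕ :=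
  (Finset.univ.filter (fun t : Fin (T - 1) => w ⟨t.1 + 1, by have := t.2; omega⟩ = i)).card

lemma head_split {S T : ℕ} (hT : 1 ≤ T) (w : Fin T → Fin S) (i : Fin S) :
    headCt S T w i + (if w ⟨T - 1, by omega⟩ = i then 1 else 0)
      = (Finset.univ.filter (fun s : Fin T => w s = i)).card := by
  classical
  have hA : headCt S T w i
      = ((Finset.univ.filter (fun s : Fin T => w s = i)).filter
          (fun s : Fin T => s.1 < T - 1)).card := by
    unfold headCt
    refine Finset.card_bij' (fun t _ => (⟨t.1, by have := t.2; omega⟩ : Fin T))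
      (fun s hs => (⟨s.1, by
        simp only [Finset.mem_filter, Finset.mem_univ, true_and] at hs; exact hs.2⟩ : Fin (T-1)))
      ?_ ?_ ?_ ?_
    · intro t ht
      simp only [Finset.mem_filter, Finset.mem_univ, true_and] at ht ⊢
      exact ⟨ht, t.2⟩
    · intro s hs
      simp only [Finset.mem_filter, Finset.mem_univ, true_and] at hs ⊢
      exact hs.1
    · intro t _; rfl
    · intro s _; rfl
  have hB : ((Finset.univ.filter (fun s : Fin T => w s = i)).filter
      (fun s : Fin T => ¬ s.1 < T - 1)).card = (if w ⟨T - 1, by omega⟩ = i then 1 else 0) := by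
    have heq : (Finset.univ.filter (fun s : Fin T => w s = i)).filter
        (fun s : Fin T => ¬ s.1 < T - 1)
        = if w ⟨T - 1, by omega⟩ = i then {(⟨T - 1, by omega⟩ : Fin T)} else ∅ := by
      ext s
      simp only [Finset.mem_filter, Finset.mem_univ, true_and]
      by_cases hw : w ⟨T - 1, by omega⟩ = i
      · rw [if_pos hw]
        simp only [Finset.mem_singleton]
        constructor
        · rintro ⟨h1, h2⟩
          exact Fin.ext (by have := s.2; simp only []; omega)
        · rintro rfl
          exact ⟨hw, by show ¬ (T - 1) < T - 1; omega⟩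
      · rw [if_neg hw]
        simp only [Finset.notMem_empty, iff_false]
        rintro ⟨h1, h2⟩
        have hs : s = (⟨T - 1, by omega⟩ : Fin T) := Fin.ext (by have := s.2; simp only []; omega)
        rw [hs] at h1
        exact hw h1
    rw [heq]
    split <;> simp
  rw [hA, ← hB, Finset.card_filter_add_card_filter_not]

lemma tail_split {S T : ℕ} (hT : 1 ≤ T) (w : Fin T → Fin S) (i : Fin S) :
    tailCt S T w i + (if w ⟨0, by omega⟩ = i then 1 else 0)
      = (Finset.univ.filter (fun s : Fin T => w s = i)).card := by
  classical
  have hA : tailCt S T w i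
      = ((Finset.univ.filter (fun s : Fin T => w s = i)).filter
          (fun s : Fin T => 0 < s.1)).card := by
    unfold tailCt
    refine Finset.card_bij' (fun t _ => (⟨t.1 + 1, by have := t.2; omega⟩ : Fin T))
      (fun s hs => (⟨s.1 - 1, by simp only [Finset.mem_filter, Finset.mem_univ, true_and] at hs; have := s.2; omega⟩ : Fin (T-1)))
      ?_ ?_ ?_ ?_
    · intro t ht
      simp only [Finset.mem_filter, Finset.mem_univ, true_and] at ht ⊢
      exact ⟨ht, by show 0 < t.1 + 1; omega⟩
    · intro s hs
      simp only [Finset.mem_filter, Finset.mem_univ, true_and] at hs ⊢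
      have hpos : 0 < s.1 := hs.2
      have hse : s = (⟨s.1 - 1 + 1, by have := s.2; omega⟩ : Fin T) :=
        Fin.ext (by simp only []; omega)
      rw [← hse]
      exact hs.1
    · intro t _
      exact Fin.ext (by show t.1 + 1 - 1 = t.1; omega)
    · intro s hs
      simp only [Finset.mem_filter, Finset.mem_univ, true_and] at hs
      have hpos : 0 < s.1 := hs.2
      exact Fin.ext (by show s.1 - 1 + 1 = s.1; omega)
  have hB : ((Finset.univ.filter (fun s : Fin T => w s = i)).filter
      (fun s : Fin T => ¬ 0 < s.1)).card = (if w ⟨0, by omega⟩ = i then 1 else 0) := by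
    have heq : (Finset.univ.filter (fun s : Fin T => w s = i)).filter
        (fun s : Fin T => ¬ 0 < s.1)
        = if w ⟨0, by omega⟩ = i then {(⟨0, by omega⟩ : Fin T)} else ∅ := by
      ext s
      simp only [Finset.mem_filter, Finset.mem_univ, true_and]
      by_cases hw : w ⟨0, by omega⟩ = i
      · rw [if_pos hw]
        simp only [Finset.mem_singleton]
        constructor
        · rintro ⟨h1, h2⟩
          exact Fin.ext (by simp only []; omega)
        · rintro rfl
          exact ⟨hw, by show ¬ 0 < 0; omega⟩
      · rw [if_neg hw]
        simp only [Finset.notMem_empty, iff_false]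
        rintro ⟨h1, h2⟩
        have hs : s = (⟨0, by omega⟩ : Fin T) := Fin.ext (by simp only []; omega)
        rw [hs] at h1
        exact hw h1
    rw [heq]
    split <;> simp
  rw [hA, ← hB, Finset.card_filter_add_card_filter_not]

lemma deg_bound {S T : ℕ} (hT : 1 ≤ T) (w : Fin T → Fin S) (i : Fin S) :
    |(headCt S T w i : ℤ) - (tailCt S T w i : ℤ)| ≤ 1 := by
  have h1 := head_split hT w i
  have h2 := tail_split hT w i
  rw [abs_le]
  constructor <;>
  · split at h1 <;> split at h2 <;> omega
lemma sum_pick_fst {S T : ℕ} (w : Fin T → Fin S) (i : Fin S) (a b : Fin T) :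
    (∑ p : Fin S × Fin S, if p.1 = i then (if w a = p.1 ∧ w b = p.2 then 1 else 0) else 0)
      = if w a = i then 1 else 0 := by
  have h : ∀ p : Fin S × Fin S,
      (if p.1 = i then (if w a = p.1 ∧ w b = p.2 then 1 else 0) else 0)
      = if (w a, w b) = p then (if w a = i then 1 else 0) else 0 := by
    intro p
    by_cases hp : (w a, w b) = p
    · subst hp; simp [eq_comm]
    · rw [if_neg hp]
      by_cases h1 : p.1 = i
      · rw [if_pos h1, if_neg (by rw [Prod.ext_iff] at hp; tauto)]
      · rw [if_neg h1]
  simp_rw [h]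
  simp

lemma sum_pick_snd {S T : ℕ} (w : Fin T → Fin S) (i : Fin S) (a b : Fin T) :
    (∑ p : Fin S × Fin S, if p.2 = i then (if w a = p.1 ∧ w b = p.2 then 1 else 0) else 0)
      = if w b = i then 1 else 0 := by
  have h : ∀ p : Fin S × Fin S,
      (if p.2 = i then (if w a = p.1 ∧ w b = p.2 then 1 else 0) else 0)
      = if (w a, w b) = p then (if w b = i then 1 else 0) else 0 := by
    intro p
    by_cases hp : (w a, w b) = p
    · subst hp; simp [eq_comm]
    · rw [if_neg hp]
      by_cases h1 : p.2 = i
      · rw [if_pos h1, if_neg (by rw [Prod.ext_iff] at hp; tauto)]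
      · rw [if_neg h1]
  simp_rw [h]
  simp

lemma sum_head {S T : ℕ} (w : Fin T → Fin S) (i : Fin S) :
    ∑ p : Fin S × Fin S, (if p.1 = i then trCount S T w p else 0) = headCt S T w i := by
  unfold trCount headCt
  rw [Finset.card_filter]
  simp_rw [Finset.card_filter]
  have step : ∀ p : Fin S × Fin S, (if p.1 = i then
      ∑ t : Fin (T - 1), (if w ⟨t.1, by have := t.2; omega⟩ = p.1 ∧
        w ⟨t.1 + 1, by have := t.2; omega⟩ = p.2 then 1 else 0) else 0)
      = ∑ t : Fin (T - 1), (if p.1 = i then (if w ⟨t.1, by have := t.2; omega⟩ = p.1 ∧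
        w ⟨t.1 + 1, by have := t.2; omega⟩ = p.2 then 1 else 0) else 0) := by
    intro p; split <;> simp
  simp_rw [step]
  rw [Finset.sum_comm]
  exact Finset.sum_congr rfl fun t _ => sum_pick_fst w i _ _

lemma sum_tail {S T : ℕ} (w : Fin T → Fin S) (i : Fin S) :
    ∑ p : Fin S × Fin S, (if p.2 = i then trCount S T w p else 0) = tailCt S T w i := by
  unfold trCount tailCt
  rw [Finset.card_filter]
  simp_rw [Finset.card_filter]
  have step : ∀ p : Fin S × Fin S, (if p.2 = i then
      ∑ t : Fin (T - 1), (if w ⟨t.1, by have := t.2; omega⟩ = p.1 ∧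
        w ⟨t.1 + 1, by have := t.2; omega⟩ = p.2 then 1 else 0) else 0)
      = ∑ t : Fin (T - 1), (if p.2 = i then (if w ⟨t.1, by have := t.2; omega⟩ = p.1 ∧
        w ⟨t.1 + 1, by have := t.2; omega⟩ = p.2 then 1 else 0) else 0) := by
    intro p; split <;> simp
  simp_rw [step]
  rw [Finset.sum_comm]
  exact Finset.sum_congr rfl fun t _ => sum_pick_snd w i _ _

lemma sum_head_real {S T : ℕ} {w : Fin T → Fin S} (hw : NoLoop S T w) (i : Fin S) :
    ∑ p : {p : Fin S × Fin S // p.1 ≠ p.2}, (if p.1.1 = i then (trCount S T w p.1 : ℝ) else 0)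
      = (headCt S T w i : ℝ) := by
  rw [sum_subtype_eq (fun p => if p.1 = i then (trCount S T w p : ℝ) else 0)
    (fun q => by simp [trCount_diag hw])]
  rw [← sum_head (S := S) w i]
  push_cast [apply_ite (Nat.cast : ℕ → ℝ)]
  rfl

lemma sum_tail_real {S T : ℕ} {w : Fin T → Fin S} (hw : NoLoop S T w) (i : Fin S) :
    ∑ p : {p : Fin S × Fin S // p.1 ≠ p.2}, (if p.1.2 = i then (trCount S T w p.1 : ℝ) else 0)
      = (tailCt S T w i : ℝ) := by
  rw [sum_subtype_eq (fun p => if p.2 = i then (trCount S T w p : ℝ) else 0)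
    (fun q => by simp [trCount_diag hw])]
  rw [← sum_tail (S := S) w i]
  push_cast [apply_ite (Nat.cast : ℕ → ℝ)]
  rfl

lemma sum_trCount_real {S T : ℕ} (hT : 1 ≤ T) {w : Fin T → Fin S} (hw : NoLoop S T w) :
    ∑ p : {p : Fin S × Fin S // p.1 ≠ p.2}, (trCount S T w p.1 : ℝ) = (T : ℝ) - 1 := by
  rw [sum_subtype_eq (fun p => (trCount S T w p : ℝ)) (fun q => by simp [trCount_diag hw])]
  rw [← Nat.cast_sum, sum_trCount]
  push_cast [Nat.cast_sub hT]
  ring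

end Aux


/-- If `x` lies in `ℤA ∩ cone(A)` for the design matrix of the THMC model without
initial parameters and without self-loops, then the total of `x` is `k(T-1)` for some
`k ∈ ℕ` and at every state the out-degree and in-degree differ by at most `k`. -/
theorem stmt9 (S T : ℕ) (hS : 3 ≤ S) (hT : 4 ≤ T)
    (x : {p : Fin S × Fin S // p.1 ≠ p.2} → ℤ)
    (hlat : x ∈ AddSubgroup.closure
      {v : {p : Fin S × Fin S // p.1 ≠ p.2} → ℤ | ∃ w : Fin T → Fin S, NoLoop S T w ∧
        v = fun p => (trCount S T w p.1 : ℤ)})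
    (hcone : ∃ lam : {w : Fin T → Fin S // NoLoop S T w} → ℝ,
      (∀ w, 0 ≤ lam w) ∧
      ∀ p, (x p : ℝ) = ∑ w : {w : Fin T → Fin S // NoLoop S T w},
        lam w * (trCount S T w.1 p.1 : ℝ)) :
    ∃ k : ℕ, (∑ p : {p : Fin S × Fin S // p.1 ≠ p.2}, x p) = (k : ℤ) * ((T : ℤ) - 1) ∧
      ∀ i : Fin S,
        |(∑ p : {p : Fin S × Fin S // p.1 ≠ p.2}, if p.1.1 = i then x p else 0) -
          (∑ p : {p : Fin S × Fin S // p.1 ≠ p.2}, if p.1.2 = i then x p else 0)| ≤ k := by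
  classical
  have hT1 : 1 ≤ T := by omega
  obtain ⟨lam, hlam0, hx⟩ := hcone
  -- Step 1: divisibility of the total
  have hdvd : ∀ y ∈ AddSubgroup.closure
      {v : {p : Fin S × Fin S // p.1 ≠ p.2} → ℤ | ∃ w : Fin T → Fin S, NoLoop S T w ∧
        v = fun p => (trCount S T w p.1 : ℤ)},
      ((T : ℤ) - 1) ∣ ∑ p : {p : Fin S × Fin S // p.1 ≠ p.2}, y p := by
    intro y hy
    induction hy using AddSubgroup.closure_induction with
    | mem v hv =>
        obtain ⟨w, hw, rfl⟩ := hv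
        have : ∑ p : {p : Fin S × Fin S // p.1 ≠ p.2}, (trCount S T w p.1 : ℤ)
            = (T : ℤ) - 1 := by
          rw [sum_subtype_eq (fun p => (trCount S T w p : ℤ))
            (fun q => by simp [trCount_diag hw])]
          rw [← Nat.cast_sum, sum_trCount]
          push_cast [Nat.cast_sub hT1]
          ring
        rw [this]
    | zero => simp
    | add a b _ _ ha hb => simpa [Finset.sum_add_distrib] using dvd_add ha hb
    | neg a _ ha => simpa using ha.neg_right
  obtain ⟨m, hm⟩ := hdvd x hlat
  -- Step 2: the sum of lambdas equals m
  have hT0 : (T : ℝ) - 1 ≠ 0 := by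
    have : (4 : ℝ) ≤ (T : ℝ) := by exact_mod_cast hT
    linarith
  have htot : ((∑ p : {p : Fin S × Fin S // p.1 ≠ p.2}, x p : ℤ) : ℝ)
      = (∑ w : {w : Fin T → Fin S // NoLoop S T w}, lam w) * ((T : ℝ) - 1) := by
    push_cast
    calc ∑ p : {p : Fin S × Fin S // p.1 ≠ p.2}, (x p : ℝ)
        = ∑ p : {p : Fin S × Fin S // p.1 ≠ p.2},
          ∑ w : {w : Fin T → Fin S // NoLoop S T w}, lam w * (trCount S T w.1 p.1 : ℝ) :=
          Finset.sum_congr rfl fun p _ => hx p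
      _ = ∑ w : {w : Fin T → Fin S // NoLoop S T w},
          ∑ p : {p : Fin S × Fin S // p.1 ≠ p.2}, lam w * (trCount S T w.1 p.1 : ℝ) :=
          Finset.sum_comm
      _ = ∑ w : {w : Fin T → Fin S // NoLoop S T w}, lam w * ((T : ℝ) - 1) := by
          refine Finset.sum_congr rfl fun w _ => ?_
          rw [← Finset.mul_sum, sum_trCount_real hT1 w.2]
      _ = _ := by rw [← Finset.sum_mul]
  have hlamsum : (∑ w : {w : Fin T → Fin S // NoLoop S T w}, lam w) = (m : ℝ) := by
    have h1 : (m : ℝ) * ((T : ℝ) - 1)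
        = (∑ w : {w : Fin T → Fin S // NoLoop S T w}, lam w) * ((T : ℝ) - 1) := by
      rw [← htot, hm]; push_cast; ring
    exact (mul_right_cancel₀ hT0 h1.symm)
  have hm0 : 0 ≤ m := by
    have h0 : (0 : ℝ) ≤ (m : ℝ) := hlamsum ▸ Finset.sum_nonneg fun w _ => hlam0 w
    exact_mod_cast h0
  refine ⟨m.toNat, ?_, ?_⟩
  · rw [hm, Int.toNat_of_nonneg hm0]; ring
  · intro i
    set L := ∑ p : {p : Fin S × Fin S // p.1 ≠ p.2}, if p.1.1 = i then x p else 0 with hL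
    set R := ∑ p : {p : Fin S × Fin S // p.1 ≠ p.2}, if p.1.2 = i then x p else 0 with hR
    have hLr : (L : ℝ) = ∑ w : {w : Fin T → Fin S // NoLoop S T w},
        lam w * (headCt S T w.1 i : ℝ) := by
      rw [hL]
      push_cast [apply_ite (Int.cast : ℤ → ℝ)]
      calc ∑ p : {p : Fin S × Fin S // p.1 ≠ p.2}, (if p.1.1 = i then (x p : ℝ) else 0)
          = ∑ p : {p : Fin S × Fin S // p.1 ≠ p.2},
            ∑ w : {w : Fin T → Fin S // NoLoop S T w},
              (if p.1.1 = i then lam w * (trCount S T w.1 p.1 : ℝ) else 0) := by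
            refine Finset.sum_congr rfl fun p _ => ?_
            rw [hx p]
            split <;> simp
        _ = ∑ w : {w : Fin T → Fin S // NoLoop S T w},
            ∑ p : {p : Fin S × Fin S // p.1 ≠ p.2},
              (if p.1.1 = i then lam w * (trCount S T w.1 p.1 : ℝ) else 0) := Finset.sum_comm
        _ = _ := by
            refine Finset.sum_congr rfl fun w _ => ?_
            rw [← sum_head_real w.2 i, Finset.mul_sum]
            refine Finset.sum_congr rfl fun p _ => ?_
            split <;> simp
    have hRr : (R : ℝ) = ∑ w : {w : Fin T → Fin S // NoLoop S T w},
        lam w * (tailCt S T w.1 i : ℝ) := by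
      rw [hR]
      push_cast [apply_ite (Int.cast : ℤ → ℝ)]
      calc ∑ p : {p : Fin S × Fin S // p.1 ≠ p.2}, (if p.1.2 = i then (x p : ℝ) else 0)
          = ∑ p : {p : Fin S × Fin S // p.1 ≠ p.2},
            ∑ w : {w : Fin T → Fin S // NoLoop S T w},
              (if p.1.2 = i then lam w * (trCount S T w.1 p.1 : ℝ) else 0) := by
            refine Finset.sum_congr rfl fun p _ => ?_
            rw [hx p]
            split <;> simp
        _ = ∑ w : {w : Fin T → Fin S // NoLoop S T w},
            ∑ p : {p : Fin S × Fin S // p.1 ≠ p.2},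
              (if p.1.2 = i then lam w * (trCount S T w.1 p.1 : ℝ) else 0) := Finset.sum_comm
        _ = _ := by
            refine Finset.sum_congr rfl fun w _ => ?_
            rw [← sum_tail_real w.2 i, Finset.mul_sum]
            refine Finset.sum_congr rfl fun p _ => ?_
            split <;> simp
    have hbound : (|L - R| : ℝ) ≤ (m : ℝ) := by
      push_cast
      rw [hLr, hRr, ← Finset.sum_sub_distrib]
      calc |∑ w : {w : Fin T → Fin S // NoLoop S T w},
            (lam w * (headCt S T w.1 i : ℝ) - lam w * (tailCt S T w.1 i : ℝ))|
          ≤ ∑ w : {w : Fin T → Fin S // NoLoop S T w},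
            |lam w * (headCt S T w.1 i : ℝ) - lam w * (tailCt S T w.1 i : ℝ)| :=
            Finset.abs_sum_le_sum_abs _ _
        _ ≤ ∑ w : {w : Fin T → Fin S // NoLoop S T w}, lam w := by
            refine Finset.sum_le_sum fun w _ => ?_
            rw [← mul_sub, abs_mul, abs_of_nonneg (hlam0 w)]
            have hd : |(headCt S T w.1 i : ℝ) - (tailCt S T w.1 i : ℝ)| ≤ 1 := by
              have := deg_bound (S := S) hT1 w.1 i
              exact_mod_cast this
            calc lam w * |(headCt S T w.1 i : ℝ) - (tailCt S T w.1 i : ℝ)|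
                ≤ lam w * 1 := mul_le_mul_of_nonneg_left hd (hlam0 w)
              _ = lam w := mul_one _
        _ = (m : ℝ) := hlamsum
    have : |L - R| ≤ m := by exact_mod_cast hbound
    calc |L - R| ≤ m := this
      _ = (m.toNat : ℤ) := (Int.toNat_of_nonneg hm0).symm
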